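/- With p_i(m) = (m + n − i + 1)/(nm + n(n+1)/2), for all x ∈ ℝ and all m: ∑_{i=1}^n p_i(m) F_{n-i+1:n}(x) ≤ F(x) ≤ ∑_{i=1}^n p_i(m) F_{i:n}(x), and both sides converge to F(x) as m → ∞. -/

import Mathlib

open MeasureTheory ProbabilityTheory Finset Filter

/-- The `i`-th order statistic (0-indexed) of the values `X 0 ω, ..., X (n-1) ω`. -/
noncomputable def orderStat {Ω : Type*} {n : ℕ} (X : Fin n → Ω → ℝ) (i : Fin n) (ω : Ω) : ℝ :=
  X (Tuple.sort (fun j => X j ω) i) ω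

/-- The weight `p_{i+1}(m) = (m + n − (i+1) + 1)/(nm + n(n+1)/2)` for `i : Fin n` (0-indexed). -/
noncomputable def weight (n : ℕ) (m : ℕ) (i : Fin n) : ℝ :=
  ((m : ℝ) + n - (i : ℕ)) / (n * m + n * (n + 1) / 2)

/-- The number of values `X j ω` which are `≤ x`. -/
noncomputable def countLe {Ω : Type*} {n : ℕ} (X : Fin n → Ω → ℝ) (x : ℝ) (ω : Ω) : ℕ :=
  (Finset.univ.filter (fun j => X j ω ≤ x)).card

lemma countLe_le {Ω : Type*} {n : ℕ} (X : Fin n → Ω → ℝ) (x : ℝ) (ω : Ω) :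
    countLe X x ω ≤ n := by
  simpa [countLe] using Finset.card_filter_le (Finset.univ : Finset (Fin n)) _

lemma orderStat_le_iff {Ω : Type*} {n : ℕ} (X : Fin n → Ω → ℝ) (i : Fin n) (x : ℝ) (ω : Ω) :
    orderStat X i ω ≤ x ↔ (i : ℕ) + 1 ≤ countLe X x ω := by
  set f : Fin n → ℝ := fun j => X j ω with hf
  have hmono := Tuple.monotone_sort f
  set σ := Tuple.sort f with hσ
  have hcard : countLe X x ω = (Finset.univ.filter (fun j => f (σ j) ≤ x)).card := by
    unfold countLe
    rw [Finset.card_filter, Finset.card_filter]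
    exact (Equiv.sum_comp σ fun j => if f j ≤ x then 1 else 0).symm
  have hos : orderStat X i ω = f (σ i) := rfl
  rw [hos, hcard]
  constructor
  · intro h
    have hsub : Finset.Iic i ⊆ Finset.univ.filter (fun j => f (σ j) ≤ x) := by
      intro j hj
      simp only [Finset.mem_Iic] at hj
      simp only [Finset.mem_filter, Finset.mem_univ, true_and]
      exact le_trans (hmono hj) h
    have := Finset.card_le_card hsub
    rwa [Fin.card_Iic] at this
  · intro h
    by_contra hgt
    push_neg at hgt
    have hsub : Finset.univ.filter (fun j => f (σ j) ≤ x) ⊆ Finset.Iio i := by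
      intro j hj
      simp only [Finset.mem_filter, Finset.mem_univ, true_and] at hj
      simp only [Finset.mem_Iio]
      by_contra hij
      push_neg at hij
      exact absurd (le_trans (hmono hij) hj) (not_le.2 hgt)
    have := Finset.card_le_card hsub
    rw [Fin.card_Iio] at this
    omega

lemma measurable_countLe {Ω : Type*} [MeasurableSpace Ω] {n : ℕ} {X : Fin n → Ω → ℝ}
    (hmeas : ∀ i, Measurable (X i)) (x : ℝ) : Measurable (countLe X x) := by
  have : countLe X x = fun ω => ∑ j : Fin n, if X j ω ≤ x then 1 else 0 := by
    funext ω; rw [countLe, Finset.card_filter]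
  rw [this]
  exact Finset.measurable_sum _ fun j _ =>
    Measurable.ite (measurableSet_le (hmeas j) measurable_const) measurable_const measurable_const

lemma measurableSet_orderStat_le {Ω : Type*} [MeasurableSpace Ω] {n : ℕ} {X : Fin n → Ω → ℝ}
    (hmeas : ∀ i, Measurable (X i)) (i : Fin n) (x : ℝ) :
    MeasurableSet {ω | orderStat X i ω ≤ x} := by
  have h : {ω | orderStat X i ω ≤ x} = countLe X x ⁻¹' (Set.Ici ((i : ℕ) + 1)) := by
    ext ω
    simp only [Set.mem_setOf_eq, Set.mem_preimage, Set.mem_Ici]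
    exact orderStat_le_iff X i x ω
  rw [h]
  exact measurable_countLe hmeas x measurableSet_Ici

lemma sum_measure_orderStat {Ω : Type*} [MeasurableSpace Ω] (μ : Measure Ω) {n : ℕ}
    {X : Fin n → Ω → ℝ} (hmeas : ∀ i, Measurable (X i)) (x : ℝ) :
    ∑ i : Fin n, μ {ω | orderStat X i ω ≤ x} = ∑ j : Fin n, μ {ω | X j ω ≤ x} := by
  have hc := measurable_countLe hmeas x
  have hA : ∀ i : Fin n,
      μ {ω | orderStat X i ω ≤ x} = ∫⁻ ω, ((if (i : ℕ) + 1 ≤ countLe X x ω then 1 else 0 : ℕ) : ENNReal) ∂μ := by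
    intro i
    rw [← lintegral_indicator_one (measurableSet_orderStat_le hmeas i x)]
    congr 1
    funext ω
    by_cases h : orderStat X i ω ≤ x
    · simp [Set.indicator_of_mem, h, (orderStat_le_iff X i x ω).1 h]
    · have := (not_iff_not.2 (orderStat_le_iff X i x ω)).1 h
      simp [Set.indicator_of_notMem, h, this]
  have hB : ∀ j : Fin n,
      μ {ω | X j ω ≤ x} = ∫⁻ ω, ((if X j ω ≤ x then 1 else 0 : ℕ) : ENNReal) ∂μ := by
    intro j
    rw [← lintegral_indicator_one (measurableSet_le (hmeas j) measurable_const)]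
    congr 1
    funext ω
    by_cases h : X j ω ≤ x <;> simp [h]
  simp_rw [hA, hB]
  rw [← lintegral_finset_sum, ← lintegral_finset_sum]
  · congr 1
    funext ω
    have key : ∑ i : Fin n, (if (i : ℕ) + 1 ≤ countLe X x ω then 1 else 0 : ℕ)
        = ∑ j : Fin n, (if X j ω ≤ x then 1 else 0 : ℕ) := by
      have h2 : ∑ j : Fin n, (if X j ω ≤ x then 1 else 0 : ℕ) = countLe X x ω := by
        rw [countLe, Finset.card_filter]
      rw [h2]
      have hle := countLe_le X x ω
      set c := countLe X x ω with hcc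
      rw [Fin.sum_univ_eq_sum_range (fun i => if i + 1 ≤ c then 1 else 0) n]
      have : ∀ i : ℕ, (if i + 1 ≤ c then 1 else 0 : ℕ) = (if i < c then 1 else 0) := by
        intro i; rfl
      simp_rw [this]
      rw [← Finset.card_filter]
      have : (Finset.range n).filter (· < c) = Finset.range c := by
        ext i; simp only [Finset.mem_filter, Finset.mem_range]; omega
      rw [this, Finset.card_range]
    calc ∑ i : Fin n, ((if (i : ℕ) + 1 ≤ countLe X x ω then 1 else 0 : ℕ) : ENNReal)
        = ((∑ i : Fin n, (if (i : ℕ) + 1 ≤ countLe X x ω then 1 else 0 : ℕ) : ℕ) : ENNReal) := by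
          rw [Nat.cast_sum]
      _ = ((∑ j : Fin n, (if X j ω ≤ x then 1 else 0 : ℕ) : ℕ) : ENNReal) := by rw [key]
      _ = ∑ j : Fin n, ((if X j ω ≤ x then 1 else 0 : ℕ) : ENNReal) := by rw [Nat.cast_sum]
  · intro j _
    exact measurable_from_nat.comp
      (Measurable.ite (measurableSet_le (hmeas j) measurable_const) measurable_const
        measurable_const)
  · intro i _
    exact measurable_from_nat.comp
      (Measurable.ite (hc measurableSet_Ici) measurable_const measurable_const)

lemma denom_pos {n : ℕ} (hn : 0 < n) (m : ℕ) : (0 : ℝ) < n * m + n * (n + 1) / 2 := by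
  have h1 : (1 : ℝ) ≤ n := by exact_mod_cast hn
  have h2 : (0 : ℝ) ≤ (n : ℝ) * m := by positivity
  nlinarith

lemma weight_antitone {n : ℕ} (hn : 0 < n) (m : ℕ) : Antitone (weight n m) := by
  intro i j hij
  unfold weight
  have hD := denom_pos hn m
  have hij' : ((i : ℕ) : ℝ) ≤ ((j : ℕ) : ℝ) := by exact_mod_cast hij
  gcongr

lemma sum_weight {n : ℕ} (hn : 0 < n) (m : ℕ) : ∑ i : Fin n, weight n m i = 1 := by
  unfold weight
  rw [← Finset.sum_div, div_eq_one_iff_eq (ne_of_gt (denom_pos hn m))]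
  rw [Fin.sum_univ_eq_sum_range (fun i => (m : ℝ) + n - i) n]
  have hn1 : (1 : ℕ) ≤ n := hn
  have hS : (∑ i ∈ Finset.range n, (i : ℝ)) = (n : ℝ) * ((n : ℝ) - 1) / 2 := by
    have h := Finset.sum_range_id_mul_two n
    have h2 : ((∑ i ∈ Finset.range n, i : ℕ) : ℝ) * 2 = ((n * (n - 1) : ℕ) : ℝ) := by
      exact_mod_cast congrArg (Nat.cast : ℕ → ℝ) h
    rw [Nat.cast_mul, Nat.cast_sub hn1, Nat.cast_sum] at h2
    push_cast at h2 ⊢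
    linarith
  have hsplit : ∑ i ∈ Finset.range n, ((m : ℝ) + n - i)
      = n * ((m : ℝ) + n) - (∑ i ∈ Finset.range n, (i : ℝ)) := by
    rw [Finset.sum_sub_distrib, Finset.sum_const, Finset.card_range, nsmul_eq_mul]
  rw [hsplit, hS]
  ring

/-- Theorem 1, (3) and (4): for the explicit weights `pᵢ(m)`, the mixtures of
order-statistic CDFs sandwich `F` for every `m`, and both converge to `F`. -/
theorem orderStat_mixture_bounds_weights {Ω : Type*} [MeasurableSpace Ω]
    (μ : Measure Ω) [IsProbabilityMeasure μ] (n : ℕ) (hn : 0 < n)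
    (X : Fin n → Ω → ℝ) (hmeas : ∀ i, Measurable (X i))
    (hindep : iIndepFun X μ)
    (F : ℝ → ℝ) (hF : ∀ i x, (μ {ω | X i ω ≤ x}).toReal = F x) :
    ∀ x : ℝ,
      (∀ m : ℕ, 1 ≤ m →
        (∑ i : Fin n, weight n m i * (μ {ω | orderStat X i.rev ω ≤ x}).toReal) ≤ F x ∧
        F x ≤ ∑ i : Fin n, weight n m i * (μ {ω | orderStat X i ω ≤ x}).toReal) ∧
      Tendsto (fun m : ℕ =>
        ∑ i : Fin n, weight n m i * (μ {ω | orderStat X i.rev ω ≤ x}).toReal)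
        atTop (nhds (F x)) ∧
      Tendsto (fun m : ℕ =>
        ∑ i : Fin n, weight n m i * (μ {ω | orderStat X i ω ≤ x}).toReal)
        atTop (nhds (F x)) := by
  intro x
  have hnR : (0 : ℝ) < n := by exact_mod_cast hn
  set G : Fin n → ℝ := fun i => (μ {ω | orderStat X i ω ≤ x}).toReal with hG
  have hsum : ∑ i : Fin n, G i = n * F x := by
    rw [hG]
    rw [← ENNReal.toReal_sum (fun i _ => measure_ne_top μ _),
        sum_measure_orderStat μ hmeas x,
        ENNReal.toReal_sum (fun j _ => measure_ne_top μ _)]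
    simp only [hF]
    rw [Finset.sum_const, Finset.card_univ, Fintype.card_fin, nsmul_eq_mul]
  have hGanti : Antitone G := by
    intro i j hij
    apply ENNReal.toReal_mono (measure_ne_top μ _)
    apply measure_mono
    intro ω hω
    have h1 := (orderStat_le_iff X j x ω).1 hω
    exact (orderStat_le_iff X i x ω).2 (le_trans (by omega : (i : ℕ) + 1 ≤ (j : ℕ) + 1) h1)
  have hGrevmono : Monotone (fun i : Fin n => G i.rev) := by
    intro i j hij
    exact hGanti (Fin.rev_le_rev.2 hij)
  have hrevsum : ∑ i : Fin n, G i.rev = n * F x := by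
    rw [Fintype.sum_equiv (Fin.revPerm) (fun i => G i.rev) G (fun i => rfl)]
    exact hsum
  have hbounds : ∀ m : ℕ,
      (∑ i : Fin n, weight n m i * G i.rev) ≤ F x ∧
      F x ≤ ∑ i : Fin n, weight n m i * G i := by
    intro m
    have hw := weight_antitone hn m
    constructor
    · have hav : AntivaryOn (weight n m) (fun i : Fin n => G i.rev)
          (Finset.univ : Finset (Fin n)) := (hw.antivary hGrevmono).antivaryOn _
      have hc := hav.card_mul_sum_le_sum_mul_sum
      rw [sum_weight hn m, Finset.card_univ, Fintype.card_fin, hrevsum, one_mul] at hc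
      exact (mul_le_mul_iff_right₀ hnR).1 hc
    · have hmv : MonovaryOn (weight n m) G (Finset.univ : Finset (Fin n)) :=
        (hw.monovary hGanti).monovaryOn _
      have hc := hmv.sum_mul_sum_le_card_mul_sum
      rw [sum_weight hn m, Finset.card_univ, Fintype.card_fin, hsum, one_mul] at hc
      exact (mul_le_mul_iff_right₀ hnR).1 hc
  have htendw : ∀ i : Fin n,
      Tendsto (fun m : ℕ => weight n m i) atTop (nhds (1 / (n : ℝ))) := by
    intro i
    have h1 : Tendsto (fun m : ℕ => 1 + ((n : ℝ) - i) / m) atTop (nhds 1) := by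
      have := tendsto_const_div_atTop_nhds_zero_nat ((n : ℝ) - i)
      simpa using tendsto_const_nhds.add this
    have h2 : Tendsto (fun m : ℕ => (n : ℝ) + ((n : ℝ) * (n + 1) / 2) / m) atTop
        (nhds ((n : ℝ))) := by
      have := tendsto_const_div_atTop_nhds_zero_nat ((n : ℝ) * (n + 1) / 2)
      simpa using tendsto_const_nhds.add this
    have hdiv := h1.div h2 (ne_of_gt hnR)
    refine Tendsto.congr' ?_ hdiv
    filter_upwards [eventually_ge_atTop 1] with m hm
    have hm0 : (0 : ℝ) < m := by exact_mod_cast hm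
    have hD := denom_pos hn m
    unfold weight
    show (1 + ((n : ℝ) - i) / m) / ((n : ℝ) + (n : ℝ) * (n + 1) / 2 / m)
        = ((m : ℝ) + n - i) / ((n : ℝ) * m + (n : ℝ) * (n + 1) / 2)
    rw [div_eq_div_iff (by positivity) (ne_of_gt hD)]
    field_simp
    ring
  have htend : ∀ H : Fin n → ℝ, (∑ i : Fin n, H i = n * F x) →
      Tendsto (fun m : ℕ => ∑ i : Fin n, weight n m i * H i) atTop (nhds (F x)) := by
    intro H hH
    have h1 : Tendsto (fun m : ℕ => ∑ i : Fin n, weight n m i * H i) atTop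
        (nhds (∑ i : Fin n, 1 / (n : ℝ) * H i)) :=
      tendsto_finset_sum _ fun i _ => (htendw i).mul tendsto_const_nhds
    have h2 : ∑ i : Fin n, 1 / (n : ℝ) * H i = F x := by
      rw [← Finset.mul_sum, hH]
      field_simp
    rwa [h2] at h1
  refine ⟨fun m _ => ⟨(hbounds m).1, (hbounds m).2⟩, htend _ hrevsum, htend G hsum⟩
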